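/- Let n ≥ 2, let M be a two-variable mean function, and let 0 < x_1⁰ ≤ x_2⁰ ≤ ⋯ ≤ x_n⁰ be reals. Define the chain iteration: x_1^{k+1} = M(x_1^k, x_2^k), x_n^{k+1} = M(x_{n-1}^k, x_n^k), and x_i^{k+1} = M(x_{i-1}^k, x_{i+1}^k) for 1 < i < n. Then for every i the sequence k ↦ x_i^k converges, all n limits are equal, and the common limit L satisfies x_1⁰ ≤ L ≤ x_n⁰. -/

import Mathlib

open Filter Topology

/-- A two-variable mean function on positive reals: idempotent, symmetric, strictly
internal, nondecreasing in each argument (strictly so when both increase), and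
continuous on the positive quadrant. -/
structure IsMeanFun2 (M : ℝ → ℝ → ℝ) : Prop where
  idem : ∀ x : ℝ, 0 < x → M x x = x
  symm : ∀ x y : ℝ, 0 < x → 0 < y → M x y = M y x
  between : ∀ x y : ℝ, 0 < x → x < y → x < M x y ∧ M x y < y
  mono : ∀ x y x' y' : ℝ, 0 < x → 0 < y → 0 < x' → 0 < y' →
    x ≤ x' → y ≤ y' → M x y ≤ M x' y'
  strictMono : ∀ x y x' y' : ℝ, 0 < x → 0 < y → 0 < x' → 0 < y' →
    x < x' → y < y' → M x y < M x' y'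
  continuousOn : ContinuousOn (fun p : ℝ × ℝ => M p.1 p.2) {p | 0 < p.1 ∧ 0 < p.2}

set_option maxHeartbeats 1000000 in
/-- **Theorem 3.2.** For `n ≥ 2`, a two-variable mean `M` and a nondecreasing
positive tuple `0 < x₀ ≤ … ≤ x_{n-1}` (indices `0, …, n-1`), the chain iteration
`x₀^{k+1} = M(x₀^k, x₁^k)`, `x_{n-1}^{k+1} = M(x_{n-2}^k, x_{n-1}^k)`,
`x_i^{k+1} = M(x_{i-1}^k, x_{i+1}^k)` for `0 < i < n-1`, converges in every
coordinate to a common limit `L` with `x₀ ≤ L ≤ x_{n-1}`. -/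
theorem chain_iteration_converges
    (n : ℕ) (hn : 2 ≤ n) (M : ℝ → ℝ → ℝ) (hM : IsMeanFun2 M)
    (X : ℕ → ℝ) (hpos : 0 < X 0)
    (hmono : ∀ i j, i ≤ j → j < n → X i ≤ X j)
    (Y : ℕ → ℕ → ℝ) (hY0 : ∀ i < n, Y 0 i = X i)
    (hfirst : ∀ k, Y (k + 1) 0 = M (Y k 0) (Y k 1))
    (hlast : ∀ k, Y (k + 1) (n - 1) = M (Y k (n - 2)) (Y k (n - 1)))
    (hmid : ∀ k i, 0 < i → i < n - 1 → Y (k + 1) i = M (Y k (i - 1)) (Y k (i + 1))) :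
    ∃ L : ℝ, (∀ i < n, Tendsto (fun k => Y k i) atTop (𝓝 L)) ∧
      X 0 ≤ L ∧ L ≤ X (n - 1) := by
  obtain ⟨N, rfl⟩ : ∃ N, n = N + 2 := ⟨n - 2, by omega⟩
  clear hn
  -- normalize the recursion equations
  have hlast' : ∀ k, Y (k + 1) (N + 1) = M (Y k N) (Y k (N + 1)) := by
    intro k
    simpa [show N + 2 - 1 = N + 1 by omega, show N + 2 - 2 = N by omega] using hlast k
  have hmid' : ∀ k j, j < N → Y (k + 1) (j + 1) = M (Y k j) (Y k (j + 2)) := by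
    intro k j hj
    have h := hmid k (j + 1) (by omega) (by omega)
    simpa [show j + 1 - 1 = j by omega] using h
  -- mean helper facts
  have hle : ∀ x y : ℝ, 0 < x → x ≤ y → x ≤ M x y ∧ M x y ≤ y := by
    intro x y hx hxy
    rcases eq_or_lt_of_le hxy with h | h
    · subst h; rw [hM.idem x hx]; exact ⟨le_rfl, le_rfl⟩
    · exact ⟨(hM.between x y hx h).1.le, (hM.between x y hx h).2.le⟩
  have heq : ∀ x y : ℝ, 0 < x → x ≤ y → M x y = x → y = x := by
    intro x y hx hxy hMxy
    rcases eq_or_lt_of_le hxy with h | h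
    · exact h.symm
    · exfalso
      have := (hM.between x y hx h).1
      rw [hMxy] at this
      exact lt_irrefl x this
  -- from adjacent monotonicity to general monotonicity
  have gen : ∀ f : ℕ → ℝ, (∀ i, i ≤ N → f i ≤ f (i + 1)) →
      ∀ i j, i ≤ j → j ≤ N + 1 → f i ≤ f j := by
    intro f hf i j hij hj
    induction j with
    | zero => interval_cases i; exact le_rfl
    | succ j ih =>
      rcases Nat.eq_or_lt_of_le hij with rfl | h
      · exact le_rfl
      · exact (ih (by omega) (by omega)).trans (hf j (by omega))
  -- main invariant
  have key : ∀ k, (∀ i j, i ≤ j → j ≤ N + 1 → Y k i ≤ Y k j) ∧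
      X 0 ≤ Y k 0 ∧ Y k (N + 1) ≤ X (N + 1) := by
    intro k
    induction k with
    | zero =>
      refine ⟨fun i j hij hj => ?_, ?_, ?_⟩
      · rw [hY0 i (by omega), hY0 j (by omega)]
        exact hmono i j hij (by omega)
      · rw [hY0 0 (by omega)]
      · rw [hY0 (N + 1) (by omega)]
    | succ k ih =>
      obtain ⟨mon, hlo, hhi⟩ := ih
      have pos : ∀ i, i ≤ N + 1 → 0 < Y k i := fun i hi =>
        hpos.trans_le (hlo.trans (mon 0 i (Nat.zero_le _) hi))
      have adj : ∀ i, i ≤ N → Y (k + 1) i ≤ Y (k + 1) (i + 1) := by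
        intro i hi
        rcases Nat.eq_zero_or_pos i with rfl | hi0
        · rcases Nat.eq_zero_or_pos N with rfl | hN
          · rw [hfirst k, hlast' k]
          · rw [hfirst k, hmid' k 0 hN]
            exact hM.mono _ _ _ _ (pos 0 (by omega)) (pos 1 (by omega))
              (pos 0 (by omega)) (pos 2 (by omega)) le_rfl (mon 1 2 (by omega) (by omega))
        · obtain ⟨j, rfl⟩ : ∃ j, i = j + 1 := ⟨i - 1, by omega⟩
          rcases Nat.eq_or_lt_of_le hi with h | h
          · -- j + 1 = N: last adjacent pair
            subst h
            rw [hmid' k j (by omega), hlast' k]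
            exact hM.mono (Y k j) (Y k (j + 2)) (Y k (j + 1)) (Y k (j + 1 + 1))
              (pos j (by omega)) (pos (j + 2) (by omega))
              (pos (j + 1) (by omega)) (pos (j + 1 + 1) (by omega))
              (mon j (j + 1) (by omega) (by omega)) (mon (j + 2) (j + 1 + 1) (by omega) (by omega))
          · rw [hmid' k j (by omega), hmid' k (j + 1) (by omega)]
            exact hM.mono _ _ _ _ (pos j (by omega)) (pos (j + 2) (by omega))
              (pos (j + 1) (by omega)) (pos (j + 3) (by omega))
              (mon j (j + 1) (by omega) (by omega)) (mon (j + 2) (j + 3) (by omega) (by omega))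
      refine ⟨gen _ adj, ?_, ?_⟩
      · rw [hfirst k]
        exact hlo.trans (hle _ _ (pos 0 (by omega)) (mon 0 1 (by omega) (by omega))).1
      · rw [hlast' k]
        exact ((hle _ _ (pos N (by omega)) (mon N (N + 1) (by omega) (by omega))).2).trans hhi
  have pos : ∀ k i, i ≤ N + 1 → 0 < Y k i := fun k i hi =>
    hpos.trans_le ((key k).2.1.trans ((key k).1 0 i (Nat.zero_le _) hi))
  -- first coordinate increases, last decreases
  have inc0 : Monotone fun k => Y k 0 := by
    apply monotone_nat_of_le_succ
    intro k
    rw [hfirst k]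
    exact (hle _ _ (pos k 0 (by omega)) ((key k).1 0 1 (by omega) (by omega))).1
  have decN : Antitone fun k => Y k (N + 1) := by
    apply antitone_nat_of_succ_le
    intro k
    rw [hlast' k]
    exact (hle _ _ (pos k N (by omega)) ((key k).1 N (N + 1) (by omega) (by omega))).2
  have hbddA : ∀ k, Y k 0 ≤ X (N + 1) := fun k =>
    ((key k).1 0 (N + 1) (by omega) le_rfl).trans (key k).2.2
  have hbddB : ∀ k, X 0 ≤ Y k (N + 1) := fun k =>
    (key k).2.1.trans ((key k).1 0 (N + 1) (by omega) le_rfl)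
  set a := ⨆ k, Y k 0 with ha_def
  set b := ⨅ k, Y k (N + 1) with hb_def
  have ha : Tendsto (fun k => Y k 0) atTop (𝓝 a) :=
    tendsto_atTop_ciSup inc0 ⟨X (N + 1), by rintro x ⟨k, rfl⟩; exact hbddA k⟩
  have hb : Tendsto (fun k => Y k (N + 1)) atTop (𝓝 b) :=
    tendsto_atTop_ciInf decN ⟨X 0, by rintro x ⟨k, rfl⟩; exact hbddB k⟩
  have hX0a : X 0 ≤ a := by
    have := le_ciSup (f := fun k => Y k 0) ⟨X (N + 1), by rintro x ⟨k, rfl⟩; exact hbddA k⟩ 0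
    rw [hY0 0 (by omega)] at this
    exact this
  have hbXN : b ≤ X (N + 1) := by
    have := ciInf_le (f := fun k => Y k (N + 1)) ⟨X 0, by rintro x ⟨k, rfl⟩; exact hbddB k⟩ 0
    rw [hY0 (N + 1) (by omega)] at this
    exact this
  have hapos : 0 < a := hpos.trans_le hX0a
  -- the compactness / subsequence part
  set u : ℕ → ℕ → ℝ := fun k i => Y k (min i (N + 1)) with hu_def
  have hu_mem : ∀ k, u k ∈ Set.Icc (fun _ : ℕ => X 0) (fun _ : ℕ => X (N + 1)) := by
    intro k
    constructor
    · intro i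
      exact (key k).2.1.trans ((key k).1 0 (min i (N + 1)) (Nat.zero_le _) (min_le_right _ _))
    · intro i
      exact (((key k).1 (min i (N + 1)) (N + 1) (min_le_right _ _) le_rfl)).trans (key k).2.2
  obtain ⟨z, hz, φ, hφ, hconv⟩ := (isCompact_Icc (a := fun _ : ℕ => X 0)
    (b := fun _ : ℕ => X (N + 1))).tendsto_subseq hu_mem
  -- the iteration map
  set p : ℕ → ℕ := fun i => if i = 0 then 0 else if N + 1 ≤ i then N else i - 1 with hp_def
  set q : ℕ → ℕ := fun i => if i = 0 then 1 else if N + 1 ≤ i then N + 1 else i + 1 with hq_def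
  set G : (ℕ → ℝ) → ℕ → ℝ := fun f i => M (f (p i)) (f (q i)) with hG_def
  have hpq_le : ∀ i, p i ≤ N + 1 ∧ q i ≤ N + 1 := by
    intro i
    simp only [hp_def, hq_def]
    split_ifs <;> omega
  have hpq_mono : ∀ i, p i ≤ q i := by
    intro i
    simp only [hp_def, hq_def]
    split_ifs <;> omega
  have hstep : ∀ k, u (k + 1) = G (u k) := by
    intro k
    funext i
    rcases Nat.eq_zero_or_pos i with rfl | hi0
    · have e0 : min 0 (N + 1) = 0 := by omega
      have e1 : min 1 (N + 1) = 1 := by omega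
      simp only [hp_def, hq_def, hu_def, hG_def, reduceIte, e0, e1]
      exact hfirst k
    · by_cases hiN : N + 1 ≤ i
      · have e0 : min i (N + 1) = N + 1 := by omega
        have e1 : min N (N + 1) = N := by omega
        have e2 : min (N + 1) (N + 1) = N + 1 := by omega
        simp only [hp_def, hq_def, hu_def, hG_def, if_neg (by omega : ¬ i = 0), if_pos hiN,
          e0, e1, e2]
        exact hlast' k
      · obtain ⟨j, rfl⟩ : ∃ j, i = j + 1 := ⟨i - 1, by omega⟩
        have e0 : min (j + 1) (N + 1) = j + 1 := by omega
        have e1 : min j (N + 1) = j := by omega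
        have e2 : min (j + 2) (N + 1) = j + 2 := by omega
        simp only [hp_def, hq_def, hu_def, hG_def, if_neg (by omega : ¬ j + 1 = 0), if_neg hiN,
          Nat.add_sub_cancel, e0, e1, e2]
        exact hmid' k j (by omega)
  -- continuity of G on positive vectors
  have hGcont : ∀ (v : ℕ → ℕ → ℝ) (w : ℕ → ℝ), (∀ j i, X 0 ≤ v j i) → (∀ i, X 0 ≤ w i) →
      Tendsto v atTop (𝓝 w) → Tendsto (fun j => G (v j)) atTop (𝓝 (G w)) := by
    intro v w hv hw hvw
    rw [tendsto_pi_nhds] at hvw ⊢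
    intro i
    have hx : (w (p i), w (q i)) ∈ {pt : ℝ × ℝ | 0 < pt.1 ∧ 0 < pt.2} :=
      ⟨hpos.trans_le (hw _), hpos.trans_le (hw _)⟩
    have hcwa := hM.continuousOn _ hx
    have htend : Tendsto (fun j => (v j (p i), v j (q i))) atTop
        (𝓝[{pt : ℝ × ℝ | 0 < pt.1 ∧ 0 < pt.2}] (w (p i), w (q i))) := by
      apply tendsto_nhdsWithin_of_tendsto_nhds_of_eventually_within
      · exact (hvw (p i)).prodMk_nhds (hvw (q i))
      · exact Filter.Eventually.of_forall fun j => ⟨hpos.trans_le (hv j _), hpos.trans_le (hv j _)⟩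
    exact hcwa.tendsto.comp htend
  -- iterated limits along the subsequence
  have hiter : ∀ m, Tendsto (fun j => u (φ j + m)) atTop (𝓝 (G^[m] z)) ∧
      (∀ i, X 0 ≤ (G^[m] z) i) := by
    intro m
    induction m with
    | zero =>
      refine ⟨by simpa [Function.comp_def] using hconv, fun i => hz.1 i⟩
    | succ m ih =>
      obtain ⟨ht, hbd⟩ := ih
      have h1 : Tendsto (fun j => G (u (φ j + m))) atTop (𝓝 (G (G^[m] z))) :=
        hGcont _ _ (fun j i => (hu_mem (φ j + m)).1 i) hbd ht
      have h2 : (fun j => G (u (φ j + m))) = fun j => u (φ j + (m + 1)) := by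
        funext j
        rw [show φ j + (m + 1) = (φ j + m) + 1 by omega, hstep]
      rw [h2] at h1
      rw [Function.iterate_succ_apply']
      refine ⟨h1, fun i => ?_⟩
      have hcoord : Tendsto (fun j => u (φ j + (m + 1)) i) atTop (𝓝 ((G (G^[m] z)) i)) :=
        (tendsto_pi_nhds.1 h1) i
      exact ge_of_tendsto hcoord
        (Filter.Eventually.of_forall fun j => (hu_mem (φ j + (m + 1))).1 i)
  have hφtop : ∀ m, Tendsto (fun j => φ j + m) atTop atTop := fun m =>
    (tendsto_add_atTop_nat m).comp hφ.tendsto_atTop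
  -- all iterates have first coordinate equal to a
  have h0 : ∀ m, (G^[m] z) 0 = a := by
    intro m
    have h1 : Tendsto (fun j => u (φ j + m) 0) atTop (𝓝 ((G^[m] z) 0)) :=
      (tendsto_pi_nhds.1 (hiter m).1) 0
    have h2 : Tendsto (fun j => u (φ j + m) 0) atTop (𝓝 a) := by
      have : (fun j => u (φ j + m) 0) = (fun k => Y k 0) ∘ (fun j => φ j + m) := by
        funext j; simp [hu_def]
      rw [this]
      exact ha.comp (hφtop m)
    exact tendsto_nhds_unique h1 h2
  -- iterates are monotone vectors
  have hitermono : ∀ m i i', i ≤ i' → (G^[m] z) i ≤ (G^[m] z) i' := by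
    intro m i i' hii
    have h1 := (tendsto_pi_nhds.1 (hiter m).1) i
    have h2 := (tendsto_pi_nhds.1 (hiter m).1) i'
    refine le_of_tendsto_of_tendsto' h1 h2 fun j => ?_
    exact (key (φ j + m)).1 (min i (N + 1)) (min i' (N + 1))
      (by omega) (min_le_right _ _)
  -- the key induction: every coordinate of every iterate is a
  have hall : ∀ t, t ≤ N + 1 → ∀ m, (G^[m] z) t = a := by
    intro t
    induction t using Nat.strong_induction_on with
    | _ t ih =>
      match t with
      | 0 => exact fun _ m => h0 m
      | Nat.succ s =>
        intro hs m
        have e : (G^[m + 1] z) s = M ((G^[m] z) (p s)) ((G^[m] z) (q s)) := by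
          rw [Function.iterate_succ_apply']
        have hqs : q s = s + 1 := by
          simp only [hq_def]
          split_ifs with h1 h2
          · omega
          · omega
          · rfl
        have hmem1 : p s < Nat.succ s := by
          simp only [hp_def]; split_ifs <;> omega
        have hps : (G^[m] z) (p s) = a := ih (p s) hmem1 (hpq_le s).1 m
        have hes : (G^[m + 1] z) s = a := ih s (by omega) (by omega) (m + 1)
        have e' : M a ((G^[m] z) (q s)) = a := by rw [hps] at e; rw [← e]; exact hes
        have hle' : a ≤ (G^[m] z) (q s) := hps ▸ hitermono m (p s) (q s) (hpq_mono s)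
        show (G^[m] z) (s + 1) = a
        rw [← hqs]
        exact heq a ((G^[m] z) (q s)) hapos hle' e'
  -- conclude b = a
  have hzN : z (N + 1) = b := by
    have h1 : Tendsto (fun j => u (φ j) (N + 1)) atTop (𝓝 (z (N + 1))) :=
      (tendsto_pi_nhds.1 hconv) (N + 1)
    have h2 : Tendsto (fun j => u (φ j) (N + 1)) atTop (𝓝 b) := by
      have : (fun j => u (φ j) (N + 1)) = (fun k => Y k (N + 1)) ∘ φ := by
        funext j; simp [hu_def]
      rw [this]
      exact hb.comp hφ.tendsto_atTop
    exact tendsto_nhds_unique h1 h2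
  have hba : b = a := by
    have := hall (N + 1) le_rfl 0
    simp only [Function.iterate_zero_apply] at this
    rw [← hzN, this]
  -- squeeze
  refine ⟨a, fun i hi => ?_, hX0a, ?_⟩
  · have hb' : Tendsto (fun k => Y k (N + 1)) atTop (𝓝 a) := hba ▸ hb
    exact tendsto_of_tendsto_of_tendsto_of_le_of_le ha hb'
      (fun k => (key k).1 0 i (Nat.zero_le _) (by omega))
      (fun k => (key k).1 i (N + 1) (by omega) le_rfl)
  · rw [show N + 2 - 1 = N + 1 by omega]
    exact hba ▸ hbXN
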